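/- Let A, α ∈ ℝ with cos(Aπ) ≠ 0 and α < −4(|cos(Aπ)| + 1)/π. Then: (a) for every k ∈ (0, 1) one has cos(kπ) + (α/(4k))·sin(kπ) < −|cos(Aπ)| (so |ξ(k)| > 1 and no spectral band meets (0,1)); and (b) there exists κ > 0 such that |cosh(κπ) + (α/(4κ))·sinh(κπ)| ≤ |cos(Aπ)| (so the first spectral band contains a negative energy −κ²). -/

import Mathlib

open scoped Real

/-- if `α < −4(|cos Aπ| + 1)/π` then (a) on `(0,1)` one has
`cos(kπ) + (α/(4k))·sin(kπ) < −|cos Aπ|`, and (b) some negative energy `−κ²` satisfies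
the spectral condition `|cosh(κπ) + (α/(4κ))·sinh(κπ)| ≤ |cos Aπ|`. -/
theorem first_band_negative (A α : ℝ) (hA : Real.cos (A * π) ≠ 0)
    (hα : α < -4 * (|Real.cos (A * π)| + 1) / π) :
    (∀ k ∈ Set.Ioo (0 : ℝ) 1,
      Real.cos (k * π) + α / (4 * k) * Real.sin (k * π) < -|Real.cos (A * π)|) ∧
    (∃ κ : ℝ, 0 < κ ∧
      |Real.cosh (κ * π) + α / (4 * κ) * Real.sinh (κ * π)| ≤ |Real.cos (A * π)|) := by
  set c := |Real.cos (A * π)| with hcdef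
  have hc0 : 0 < c := abs_pos.mpr hA
  have hc1 : c ≤ 1 := Real.abs_cos_le_one _
  have hπ : (0:ℝ) < π := Real.pi_pos
  have hαπ : α * π < -4 * (c + 1) := (lt_div_iff₀ hπ).mp hα
  have hαneg : α < 0 := by nlinarith
  constructor
  · rintro k ⟨hk0, hk1⟩
    set x := k * π with hxdef
    have hx0 : 0 < x := mul_pos hk0 hπ
    have hxπ : x < π := by
      have := mul_lt_mul_of_pos_right hk1 hπ
      simpa using this
    have hsin : 0 < Real.sin x := Real.sin_pos_of_pos_of_lt_pi hx0 hxπ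
    have hcos1 : Real.cos x ≤ 1 := Real.cos_le_one x
    -- key: 2 sin x ≥ x (1 + cos x)
    have hkey : x * (1 + Real.cos x) ≤ 2 * Real.sin x := by
      have h2 : 0 < x / 2 := by linarith
      have h3 : x / 2 < π / 2 := by linarith
      have htan := Real.lt_tan h2 h3
      have hcos2 : 0 < Real.cos (x / 2) := Real.cos_pos_of_mem_Ioo ⟨by linarith, h3⟩
      rw [Real.tan_eq_sin_div_cos, lt_div_iff₀ hcos2] at htan
      have hsinx : Real.sin x = 2 * Real.sin (x/2) * Real.cos (x/2) := by
        rw [← Real.sin_two_mul]; ring_nf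
      have hcosx : Real.cos x = 2 * Real.cos (x/2) ^ 2 - 1 := by
        have := Real.cos_sq (x/2)
        have h2x : 2 * (x/2) = x := by ring
        rw [h2x] at this
        linarith
      nlinarith [sq_nonneg (Real.cos (x/2))]
    -- α/(4k) < -(c+1)/x
    have hdiv : α / (4 * k) < -(c + 1) / x := by
      rw [div_lt_div_iff₀ (by linarith) hx0]
      have : α * π * k < -4 * (c + 1) * k := by nlinarith
      nlinarith
    have hmul : α / (4 * k) * Real.sin x < -(c + 1) / x * Real.sin x :=
      mul_lt_mul_of_pos_right hdiv hsin
    have h2 : (c + 1) * Real.sin x ≥ x * (Real.cos x + c) := by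
      nlinarith [mul_le_mul_of_nonneg_left hkey (by linarith : (0:ℝ) ≤ c + 1),
        mul_nonneg (mul_nonneg hx0.le (by linarith : (0:ℝ) ≤ 1 - c))
          (by linarith : (0:ℝ) ≤ 1 - Real.cos x)]
    have h3 : -(c + 1) / x * Real.sin x ≤ -(Real.cos x + c) := by
      rw [div_mul_eq_mul_div, div_le_iff₀ hx0]
      nlinarith
    linarith
  · -- part (b)
    have hcosh_cont : Filter.Tendsto (fun κ : ℝ => Real.cosh (κ * π))
        (nhdsWithin 0 (Set.Ioi 0)) (nhds 1) := by
      have : Continuous fun κ : ℝ => Real.cosh (κ * π) :=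
        Real.continuous_cosh.comp (continuous_id.mul continuous_const)
      have h := this.continuousAt (x := (0:ℝ))
      simpa using h.continuousWithinAt.tendsto
    have hev : ∀ᶠ κ in nhdsWithin (0:ℝ) (Set.Ioi 0),
        Real.cosh (κ * π) < 1 + c := hcosh_cont.eventually_lt_const (by linarith)
    obtain ⟨κ₀, hκ₀lt, hκ₀pos⟩ :=
      (hev.and eventually_mem_nhdsWithin).exists
    have hκ₀ : (0:ℝ) < κ₀ := hκ₀pos
    set f : ℝ → ℝ := fun κ => Real.cosh (κ * π) + α / (4 * κ) * Real.sinh (κ * π) with hf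
    have hfκ₀ : f κ₀ ≤ 0 := by
      have hs : κ₀ * π ≤ Real.sinh (κ₀ * π) :=
        le_of_lt (Real.self_lt_sinh_iff.mpr (mul_pos hκ₀ hπ))
      have : α / (4 * κ₀) * Real.sinh (κ₀ * π) ≤ α / (4 * κ₀) * (κ₀ * π) := by
        apply mul_le_mul_of_nonpos_left hs
        exact le_of_lt (div_neg_of_neg_of_pos hαneg (by linarith))
      have heq : α / (4 * κ₀) * (κ₀ * π) = α * π / 4 := by
        field_simp
      have : α / (4 * κ₀) * Real.sinh (κ₀ * π) ≤ α * π / 4 := by rw [← heq]; exact this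
      simp only [hf]
      nlinarith
    set κ₁ : ℝ := max κ₀ (-α / 4) with hκ₁def
    have hκ₁pos : 0 < κ₁ := lt_of_lt_of_le hκ₀ (le_max_left _ _)
    have hκ₀₁ : κ₀ ≤ κ₁ := le_max_left _ _
    have hfκ₁ : 0 ≤ f κ₁ := by
      have hge : -α ≤ 4 * κ₁ := by
        have := le_max_right κ₀ (-α / 4)
        linarith
      have hsnn : 0 ≤ Real.sinh (κ₁ * π) :=
        Real.sinh_nonneg_iff.mpr (le_of_lt (mul_pos hκ₁pos hπ))
      have hratio : -1 ≤ α / (4 * κ₁) := by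
        rw [neg_le, ← neg_div]
        exact (div_le_one (by linarith)).mpr hge
      have h1 : -Real.sinh (κ₁ * π) ≤ α / (4 * κ₁) * Real.sinh (κ₁ * π) := by
        nlinarith
      have h2 : Real.sinh (κ₁ * π) ≤ Real.cosh (κ₁ * π) := by
        have := Real.cosh_sub_sinh (κ₁ * π)
        nlinarith [Real.exp_pos (-(κ₁ * π))]
      simp only [hf]
      linarith
    have hcont : ContinuousOn f (Set.Icc κ₀ κ₁) := by
      apply ContinuousOn.add
      · exact (Real.continuous_cosh.comp (continuous_id.mul continuous_const)).continuousOn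
      · apply ContinuousOn.mul
        · apply ContinuousOn.div continuousOn_const
          · exact (continuous_const.mul continuous_id).continuousOn
          · intro x hx
            have : 0 < x := lt_of_lt_of_le hκ₀ hx.1
            positivity
        · exact (Real.continuous_sinh.comp (continuous_id.mul continuous_const)).continuousOn
    have hiv := intermediate_value_Icc hκ₀₁ hcont
    have h0mem : (0:ℝ) ∈ Set.Icc (f κ₀) (f κ₁) := ⟨hfκ₀, hfκ₁⟩
    obtain ⟨κ, hκmem, hκeq⟩ := hiv h0mem
    refine ⟨κ, lt_of_lt_of_le hκ₀ hκmem.1, ?_⟩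
    simp only [hf] at hκeq
    rw [hκeq]
    simpa using le_of_lt hc0
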